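/- Let π^ε be a clean compact peg permutation of length n with no entry decorated •, let I = {i,j} with 1 ≤ i ≤ j ≤ n be a multiset of indices of π, and let π̃^ε_I be the peg permutation obtained from the inflation π^ε_I by applying the reversal with indices i+1, j+1. Then π̃^ε_I is a clean compact peg permutation of length n+2 with no entry decorated •. Moreover, if the first entry of π^ε is 1⁺ and the last entry is n⁺, then the first entry of π̃^ε_I is 1⁺ and its last entry is (n+2)⁺. -/

import Mathlib

/-! ## Basic definitions: permutations as lists, reversals, distances -/

/-- Decorations for peg permutations: `+`, `-`, `•`. -/
inductive Deco where
  | plus : Deco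
  | minus : Deco
  | dot : Deco
deriving DecidableEq, Repr

/-- A peg permutation: a list of entries together with decorations. -/
abbrev PegPerm := List (ℕ × Deco)

def pegDefault : ℕ × Deco := (0, Deco.dot)

/-- The identity permutation `1 2 ⋯ n` as a list. -/
def idPerm (n : ℕ) : List ℕ := List.range' 1 n

/-- A list of naturals is a permutation (of `1,…,n` where `n` is its length). -/
def IsPermList (π : List ℕ) : Prop := π.Perm (idPerm π.length)

/-- Reverse the segment of a list from (0-indexed) position `i` to `j` inclusive. -/
def segReverse {α : Type*} (l : List α) (i j : ℕ) : List α :=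
  l.take i ++ ((l.drop i).take (j + 1 - i)).reverse ++ l.drop (j + 1)

/-- One reversal step on permutations (reverse a segment of length at least 2). -/
def RevStep (l l' : List ℕ) : Prop :=
  ∃ i j, i < j ∧ j < l.length ∧ l' = segReverse l i j

/-- One prefix reversal step on permutations (reverse a prefix of length at least 2). -/
def PrefRevStep (l l' : List ℕ) : Prop :=
  ∃ j, 0 < j ∧ j < l.length ∧ l' = segReverse l 0 j

/-- Reachability in exactly `k` steps of the step relation `step`. -/
def ReachIn {α : Type*} (step : α → α → Prop) : ℕ → α → α → Prop
  | 0, x, y => x = y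
  | k + 1, x, y => ∃ z, step x z ∧ ReachIn step k z y

/-- The reversal distance of a permutation from the identity. -/
noncomputable def rd (π : List ℕ) : ℕ :=
  sInf {k | ReachIn RevStep k π (idPerm π.length)}

/-- The prefix reversal distance of a permutation from the identity. -/
noncomputable def prd (π : List ℕ) : ℕ :=
  sInf {k | ReachIn PrefRevStep k π (idPerm π.length)}

/-- The ball of radius `k` in the reversal model. -/
def Brd (k : ℕ) : Set (List ℕ) := {π | IsPermList π ∧ rd π ≤ k}

/-- The ball of radius `k` in the prefix reversal model. -/
def Bprd (k : ℕ) : Set (List ℕ) := {π | IsPermList π ∧ prd π ≤ k}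

/-! ## Peg permutations: oriented reversals and distances -/

def flipDeco : Deco → Deco
  | Deco.plus => Deco.minus
  | Deco.minus => Deco.plus
  | Deco.dot => Deco.dot

/-- Oriented reversal of the segment from position `i` to `j` (0-indexed) of a peg
permutation: the segment is reversed and the decorations `+`, `-` are swapped. -/
def pegSegReverse (l : PegPerm) (i j : ℕ) : PegPerm :=
  l.take i ++ (((l.drop i).take (j + 1 - i)).map (fun p => (p.1, flipDeco p.2))).reverse
    ++ l.drop (j + 1)

/-- One oriented reversal step on peg permutations. -/
def PegRevStep (l l' : PegPerm) : Prop :=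
  ∃ i j, i ≤ j ∧ j < l.length ∧ l' = pegSegReverse l i j

/-- One oriented prefix reversal step on peg permutations. -/
def PegPrefRevStep (l l' : PegPerm) : Prop :=
  ∃ j, j < l.length ∧ l' = pegSegReverse l 0 j

/-- The underlying list of a peg permutation is a permutation. -/
def IsPegPermList (l : PegPerm) : Prop := IsPermList (l.map Prod.fst)

/-- An identity peg permutation: underlying identity, every decoration `+` or `•`. -/
def IsIdPeg (l : PegPerm) : Prop :=
  l.map Prod.fst = idPerm l.length ∧ ∀ p ∈ l, p.2 ≠ Deco.minus

/-- The reversal distance of a peg permutation from an identity peg permutation. -/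
noncomputable def pegRd (l : PegPerm) : ℕ :=
  sInf {k | ∃ m, IsIdPeg m ∧ ReachIn PegRevStep k l m}

/-- The prefix reversal distance of a peg permutation from an identity peg permutation. -/
noncomputable def pegPrd (l : PegPerm) : ℕ :=
  sInf {k | ∃ m, IsIdPeg m ∧ ReachIn PegPrefRevStep k l m}

/-- The ball of radius `k` of peg permutations in the reversal model. -/
def PegBrd (k : ℕ) : Set PegPerm := {l | IsPegPermList l ∧ pegRd l ≤ k}

/-- The ball of radius `k` of peg permutations in the prefix reversal model. -/
def PegBprd (k : ℕ) : Set PegPerm := {l | IsPegPermList l ∧ pegPrd l ≤ k}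

/-! ## Patterns -/

/-- Two lists of the same length are order-isomorphic. -/
def OrderIsoList (s t : List ℕ) : Prop :=
  s.length = t.length ∧
  ∀ i j, i < s.length → j < s.length → (s.getD i 0 < s.getD j 0 ↔ t.getD i 0 < t.getD j 0)

/-- `σ` is a (classical) pattern of `τ`. -/
def IsPattern (σ τ : List ℕ) : Prop :=
  ∃ s, s.Sublist τ ∧ OrderIsoList s σ

/-- `σ` is a peg pattern of `τ`: some subsequence of `τ` is order-isomorphic to `σ`
and whenever an entry of the subsequence is decorated `+` (resp. `-`), the
corresponding entry of `σ` is decorated `+` (resp. `-`). -/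
def IsPegPattern (σ τ : PegPerm) : Prop :=
  ∃ s : PegPerm, s.Sublist τ ∧ OrderIsoList (s.map Prod.fst) (σ.map Prod.fst) ∧
    ∀ i, i < s.length →
      ((s.getD i pegDefault).2 = Deco.plus → (σ.getD i pegDefault).2 = Deco.plus) ∧
      ((s.getD i pegDefault).2 = Deco.minus → (σ.getD i pegDefault).2 = Deco.minus)

/-! ## Strips, clean compact and compact peg permutations -/

/-- Two adjacent entries of a peg permutation lie in a common strip. -/
def StripPair (p q : ℕ × Deco) : Prop :=
  (q.1 = p.1 + 1 ∧ p.2 ≠ Deco.minus ∧ q.2 ≠ Deco.minus) ∨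
  (p.1 = q.1 + 1 ∧ p.2 ≠ Deco.plus ∧ q.2 ≠ Deco.plus)

/-- A peg permutation is clean compact when all its strips have length 1, i.e. no two
adjacent entries lie in a common strip. -/
def CleanCompact (l : PegPerm) : Prop :=
  ∀ i, i + 1 < l.length → ¬ StripPair (l.getD i pegDefault) (l.getD (i + 1) pegDefault)

/-- A peg permutation is compact when every strip has length 1 or consists
exclusively of entries decorated `•`. -/
def CompactPeg (l : PegPerm) : Prop :=
  ∀ i, i + 1 < l.length → StripPair (l.getD i pegDefault) (l.getD (i + 1) pegDefault) →
    (l.getD i pegDefault).2 = Deco.dot ∧ (l.getD (i + 1) pegDefault).2 = Deco.dot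

/-! ## The clean compact peg permutation `peg(γ)` associated with a permutation -/

/-- The decomposition of a permutation into maximal monotone strips of adjacent values. -/
def stripGroups (γ : List ℕ) : List (List ℕ) :=
  γ.splitBy (fun a b => b == a + 1 || a == b + 1)

def stripMin (s : List ℕ) : ℕ := s.foldr min (s.headD 0)

def stripDeco (s : List ℕ) : Deco :=
  if s.length ≤ 1 then Deco.dot
  else if s.headD 0 < s.getLastD 0 then Deco.plus
  else Deco.minus

/-- Rank of `v` among `vals` (used for rescaling). -/
def rankIn (vals : List ℕ) (v : ℕ) : ℕ := (vals.filter (fun w => w ≤ v)).length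

/-- The clean compact peg permutation associated with a permutation: replace each
strip by its minimum, decorated `+`/`-`/`•` according to the kind of strip, and rescale. -/
def pegOf (γ : List ℕ) : PegPerm :=
  (stripGroups γ).map (fun s => (rankIn ((stripGroups γ).map stripMin) (stripMin s), stripDeco s))

/-! ## Monotone inflations and grid classes -/

/-- A legal inflation vector for a peg permutation. -/
def LegalVec (πε : PegPerm) (v : List ℕ) : Prop :=
  v.length = πε.length ∧
  ∀ i, i < πε.length → (πε.getD i pegDefault).2 = Deco.dot → v.getD i 0 ≤ 1

/-- The values of the `i`-th block of the monotone inflation of `πε` through `v`: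
an increasing (resp. decreasing) run of `vᵢ` values, occupying the interval of values
determined by the relative order of the entries of `πε`. -/
def blockVals (πε : PegPerm) (v : List ℕ) (i : ℕ) : List ℕ :=
  let off := (((List.range πε.length).filter
      (fun j => (πε.getD j pegDefault).1 < (πε.getD i pegDefault).1)).map
      (fun j => v.getD j 0)).sum
  if (πε.getD i pegDefault).2 = Deco.minus then (List.range' (off + 1) (v.getD i 0)).reverse
  else List.range' (off + 1) (v.getD i 0)

/-- The monotone inflation `πε[v]`. -/
def inflate (πε : PegPerm) (v : List ℕ) : List ℕ :=
  ((List.range πε.length).map (blockVals πε v)).flatten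

/-- The grid class of a peg permutation: all its monotone inflations through legal
inflation vectors. -/
def GridOf (πε : PegPerm) : Set (List ℕ) :=
  {γ | ∃ v, LegalVec πε v ∧ γ = inflate πε v}

/-- Compatibility of decorations in peg monotone inflations: a `+` entry is inflated by
an identity peg permutation (decorations `+`/`•`), a `-` entry by a reverse identity peg
permutation (decorations `-`/`•`), a `•` entry stays `•`. -/
def DecoOK : Deco → Deco → Prop
  | Deco.plus, d => d ≠ Deco.minus
  | Deco.minus, d => d ≠ Deco.plus
  | Deco.dot, d => d = Deco.dot

/-- The peg grid class of a peg permutation: all its peg monotone inflations. -/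
def GridPegOf (πε : PegPerm) : Set PegPerm :=
  {γ | ∃ v, LegalVec πε v ∧ ∃ bs : List PegPerm,
    bs.length = πε.length ∧ γ = bs.flatten ∧
    ∀ i, i < πε.length →
      (bs.getD i []).map Prod.fst = blockVals πε v i ∧
      ∀ p ∈ bs.getD i [], DecoOK (πε.getD i pegDefault).2 p.2}

/-! ## The inflation `π^ε_I` and the permutation `π̃^ε_I` -/

/-- Canonical peg inflation: every inflated entry keeps the decoration of the
original one. -/
def pegInflate (πε : PegPerm) (v : List ℕ) : PegPerm :=
  ((List.range πε.length).map
    (fun i => (blockVals πε v i).map (fun x => (x, (πε.getD i pegDefault).2)))).flatten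

/-- The inflation vector associated with the multiset `I = {i, j}` (0-indexed):
entries `i` and `j` are inflated by one more element each. -/
def inflVec (n i j : ℕ) : List ℕ :=
  (List.range n).map (fun l => 1 + (if l = i then 1 else 0) + (if l = j then 1 else 0))

/-- `π^ε_I` where `I = {i, j}` with `i ≤ j` 0-indexed. -/
def pegI (πε : PegPerm) (i j : ℕ) : PegPerm := pegInflate πε (inflVec πε.length i j)

/-- `π̃^ε_I`: the result of applying to `π^ε_I` the oriented reversal of the segment
of (0-indexed) positions `i+1, …, j+1`. -/
def pegITilde (πε : PegPerm) (i j : ℕ) : PegPerm := pegSegReverse (pegI πε i j) (i + 1) (j + 1)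

/-! ## Clean compact peg bases -/

/-- The clean compact peg basis of a set `B` of peg permutations: the clean compact
peg permutations not in `B` all of whose proper clean compact peg patterns are in `B`. -/
def CCPegBasis (B : Set PegPerm) : Set PegPerm :=
  {πε | IsPegPermList πε ∧ CleanCompact πε ∧ πε ∉ B ∧
    ∀ γ, IsPegPermList γ → CleanCompact γ → IsPegPattern γ πε → γ ≠ πε → γ ∈ B}

/-! ## The exceptional peg permutations for the prefix reversal model -/

/-- `Θ_e(n)` for even `n`:  `n• (n−2)• ⋯ 4• 2• 1⁺ 3• ⋯ (n−3)• (n−1)•`. -/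
def ThetaE (n : ℕ) : PegPerm :=
  ((List.range (n / 2)).map (fun i => (n - 2 * i, Deco.dot))) ++ [(1, Deco.plus)] ++
  ((List.range (n / 2 - 1)).map (fun i => (3 + 2 * i, Deco.dot)))

/-- `Θ_o(n)` for odd `n`:  `n• (n−2)• ⋯ 3• 1⁻ 2• 4• ⋯ (n−3)• (n−1)•`. -/
def ThetaO (n : ℕ) : PegPerm :=
  ((List.range ((n - 1) / 2)).map (fun i => (n - 2 * i, Deco.dot))) ++ [(1, Deco.minus)] ++
  ((List.range ((n - 1) / 2)).map (fun i => (2 + 2 * i, Deco.dot)))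

/-- `Λ_e(n)` for even `n` and `t = n/2`:  `(t+1)⁺ t• (t+2)• (t−1)• ⋯ (n−1)• 2• n• 1•`. -/
def LambdaE (n : ℕ) : PegPerm :=
  (List.range (n / 2)).flatMap
    (fun i => [(n / 2 + 1 + i, if i = 0 then Deco.plus else Deco.dot), (n / 2 - i, Deco.dot)])

/-- `Λ_o(n)` for odd `n` and `t = (n+1)/2`:  `t⁻ (t+1)• (t−1)• (t+2)• ⋯ (n−1)• 2• n• 1•`. -/
def LambdaO (n : ℕ) : PegPerm :=
  ((n + 1) / 2, Deco.minus) ::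
    (List.range ((n + 1) / 2 - 1)).flatMap
      (fun i => [((n + 1) / 2 + 1 + i, Deco.dot), ((n + 1) / 2 - 1 - i, Deco.dot)])

/-! ## Auxiliary definitions and lemmas for Statement 4 -/

def flipE (p : ℕ × Deco) : ℕ × Deco := (p.1, flipDeco p.2)
lemma flipE_eq : (fun p : ℕ × Deco => (p.1, flipDeco p.2)) = flipE := rfl

lemma flipDeco_eq_dot (d : Deco) : flipDeco d = Deco.dot ↔ d = Deco.dot := by
  cases d <;> simp [flipDeco]

def dn : Deco → ℕ
  | Deco.plus => 0
  | Deco.minus => 1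
  | Deco.dot => 2

lemma stripPair_iff (p q : ℕ × Deco) : StripPair p q ↔
    ((q.1 = p.1 + 1 ∧ dn p.2 ≠ 1 ∧ dn q.2 ≠ 1) ∨
     (p.1 = q.1 + 1 ∧ dn p.2 ≠ 0 ∧ dn q.2 ≠ 0)) := by
  unfold StripPair
  rcases p with ⟨a, dp⟩; rcases q with ⟨b, dq⟩
  cases dp <;> cases dq <;> simp [dn]

lemma stripPair_flip (p q : ℕ × Deco) : StripPair (flipE q) (flipE p) ↔ StripPair p q := by
  rcases p with ⟨a, dp⟩; rcases q with ⟨b, dq⟩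
  cases dp <;> cases dq <;> simp [stripPair_iff, dn, flipE, flipDeco] <;> tauto

lemma cleanCompact_iff_chain' (l : PegPerm) :
    CleanCompact l ↔ l.Chain' (fun p q => ¬ StripPair p q) := by
  simp only [List.Chain']
  rw [List.isChain_iff_getElem]
  constructor
  · intro h k hk
    have hk2 : k + 1 < l.length := by omega
    have := h k hk2
    rw [List.getD_eq_getElem _ _ (by omega : k < l.length),
      List.getD_eq_getElem _ _ hk2] at this
    exact this
  · intro h k hk
    have := h k (by omega)
    rw [List.getD_eq_getElem _ _ (by omega : k < l.length),
      List.getD_eq_getElem _ _ hk]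
    exact this

lemma chain'_map_range' {α : Type} (R : α → α → Prop) (f : ℕ → α) (s t : ℕ)
    (h : ∀ k, s ≤ k → k + 1 < s + t → R (f k) (f (k + 1))) :
    List.Chain' R ((List.range' s t).map f) := by
  simp only [List.Chain']
  rw [List.isChain_map, List.isChain_iff_getElem]
  intro k hk
  simp only [List.length_range'] at hk
  simp only [List.get_eq_getElem, List.getElem_range']
  have := h (s + k) (by omega) (by omega)
  simpa [Nat.add_assoc] using this

lemma flatten_map_eq_map {α β : Type} (B : α → List β) (F : α → β) (xs : List α)
    (h : ∀ x ∈ xs, B x = [F x]) : (xs.map B).flatten = xs.map F := by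
  induction xs with
  | nil => simp
  | cons a l ih => simp_all

lemma countP_range'_lt (n a : ℕ) : (List.range' 1 n).countP (fun x => x < a) = min (a - 1) n := by
  induction n with
  | zero => simp
  | succ m ih =>
    rw [List.range'_concat, List.countP_append, ih]
    simp only [List.countP_singleton, one_mul, decide_eq_true_eq]
    split_ifs with h <;> omega

lemma sum_map_count (L : List ℕ) (x : ℕ) :
    (L.map (fun m => if m = x then 1 else 0)).sum = L.count x := by
  induction L with
  | nil => simp
  | cons a t ih =>
    simp only [List.map_cons, List.sum_cons, List.count_cons, ih, beq_iff_eq]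
    split_ifs <;> omega

lemma sum_map_ind (L : List ℕ) (x : ℕ) (h : L.Nodup) :
    (L.map (fun m => if m = x then 1 else 0)).sum = if x ∈ L then 1 else 0 := by
  rw [sum_map_count]
  split_ifs with hx
  · exact List.count_eq_one_of_mem h hx
  · exact List.count_eq_zero_of_not_mem hx

lemma sum_ind (i j : ℕ) (L : List ℕ) (h : L.Nodup) :
    (L.map (fun m => 1 + (if m = i then 1 else 0) + (if m = j then 1 else 0))).sum
      = L.length + (if i ∈ L then 1 else 0) + (if j ∈ L then 1 else 0) := by
  have hsplit : ∀ (f g : ℕ → ℕ) (M : List ℕ),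
      (M.map fun m => f m + g m).sum = (M.map f).sum + (M.map g).sum := by
    intro f g M
    induction M with
    | nil => simp
    | cons a t ih => simp [ih]; omega
  rw [show (fun m => 1 + (if m = i then 1 else 0) + (if m = j then 1 else 0))
      = (fun m => ((fun m => 1 + (if m = i then 1 else 0)) m + (fun m => if m = j then 1 else 0) m)) from rfl,
    hsplit, hsplit (fun _ => 1) (fun m => if m = i then 1 else 0)]
  rw [sum_map_ind L i h, sum_map_ind L j h]
  simp

lemma flipDeco_plus : flipDeco Deco.plus = Deco.minus := rfl
lemma flipDeco_minus : flipDeco Deco.minus = Deco.plus := rfl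
lemma dn_plus : dn Deco.plus = 0 := rfl
lemma dn_minus : dn Deco.minus = 1 := rfl

lemma dn_flip_add (d : Deco) (h : d ≠ Deco.dot) : dn d + dn (flipDeco d) = 1 ∧ dn d ≤ 1 := by
  cases d <;> simp_all [dn, flipDeco]

def valAt (πε : PegPerm) (k : ℕ) : ℕ := (πε.getD k pegDefault).1
def decoAt (πε : PegPerm) (k : ℕ) : Deco := (πε.getD k pegDefault).2
def gg (πε : PegPerm) (i j l : ℕ) : ℕ :=
  valAt πε l + (if valAt πε i < valAt πε l then 1 else 0)
    + (if valAt πε j < valAt πε l then 1 else 0)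

lemma map_valAt (πε : PegPerm) :
    (List.range πε.length).map (valAt πε) = πε.map Prod.fst := by
  apply List.ext_getElem (by simp)
  intro k h1 h2
  have hk : k < πε.length := by simpa using h2
  simp [valAt, List.getD_eq_getElem _ _ hk, List.getElem?_eq_getElem hk]

lemma valAt_bounds (πε : PegPerm) (h0 : IsPermList (πε.map Prod.fst)) (k : ℕ)
    (hk : k < πε.length) : 1 ≤ valAt πε k ∧ valAt πε k ≤ πε.length := by
  have hmem : valAt πε k ∈ πε.map Prod.fst := by
    rw [← map_valAt]
    exact List.mem_map_of_mem (List.mem_range.mpr hk)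
  have := h0.mem_iff.mp hmem
  rw [idPerm] at this
  simp only [List.length_map] at this
  have := List.mem_range'_1.mp this
  omega

lemma valAt_inj (πε : PegPerm) (h0 : IsPermList (πε.map Prod.fst)) {k m : ℕ}
    (hk : k < πε.length) (hm : m < πε.length) (h : valAt πε k = valAt πε m) : k = m := by
  have hnd : (πε.map Prod.fst).Nodup := by
    rw [h0.nodup_iff]
    exact List.nodup_range'
  have h1 : (πε.map Prod.fst).get ⟨k, by simpa using hk⟩
      = (πε.map Prod.fst).get ⟨m, by simpa using hm⟩ := by
    simp only [List.get_eq_getElem, List.getElem_map]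
    rw [valAt, valAt, List.getD_eq_getElem _ _ hk, List.getD_eq_getElem _ _ hm] at h
    exact h
  have := (hnd.get_inj_iff).mp h1
  exact congrArg Fin.val this

lemma inflVec_getD (n i j l : ℕ) (hl : l < n) :
    (inflVec n i j).getD l 0 = 1 + (if l = i then 1 else 0) + (if l = j then 1 else 0) := by
  rw [inflVec, List.getD_eq_getElem _ _ (by simpa using hl)]
  simp

lemma blockVals_eq (πε : PegPerm) (i j l : ℕ) (h0 : IsPermList (πε.map Prod.fst))
    (hl : l < πε.length) (hi : i < πε.length) (hj : j < πε.length) :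
    blockVals πε (inflVec πε.length i j) l =
      (if decoAt πε l = Deco.minus
       then (List.range' (gg πε i j l) (1 + (if l = i then 1 else 0) + (if l = j then 1 else 0))).reverse
       else List.range' (gg πε i j l) (1 + (if l = i then 1 else 0) + (if l = j then 1 else 0))) := by
  have hoff : (((List.range πε.length).filter
      (fun m => (πε.getD m pegDefault).1 < (πε.getD l pegDefault).1)).map
      (fun m => (inflVec πε.length i j).getD m 0)).sum + 1 = gg πε i j l := by
    set L := (List.range πε.length).filter
      (fun m => (πε.getD m pegDefault).1 < (πε.getD l pegDefault).1) with hL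
    have hmemL : ∀ x ∈ L, x < πε.length := by
      intro x hx
      rw [hL, List.mem_filter, List.mem_range] at hx
      exact hx.1
    have e1 : (L.map (fun m => (inflVec πε.length i j).getD m 0)).sum
        = (L.map (fun m => 1 + (if m = i then 1 else 0) + (if m = j then 1 else 0))).sum := by
      congr 1
      apply List.map_congr_left
      intro x hx
      exact inflVec_getD _ _ _ _ (hmemL x hx)
    have hnd : L.Nodup := List.nodup_range.filter _
    rw [e1, sum_ind i j L hnd]
    have hlen : L.length = valAt πε l - 1 := by
      rw [hL, ← List.countP_eq_length_filter]
      have : (List.range πε.length).countP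
          (fun m => decide ((πε.getD m pegDefault).1 < (πε.getD l pegDefault).1))
          = ((List.range πε.length).map (valAt πε)).countP
            (fun x => decide (x < valAt πε l)) := by
        rw [List.countP_map]
        rfl
      rw [this, map_valAt]
      rw [h0.countP_eq]
      rw [idPerm]
      simp only [List.length_map]
      have hb := valAt_bounds πε h0 l hl
      have : (List.range' 1 πε.length).countP (fun x => decide (x < valAt πε l))
          = min (valAt πε l - 1) πε.length := countP_range'_lt _ _
      rw [this]
      omega
    have hmi : (i ∈ L) ↔ valAt πε i < valAt πε l := by
      rw [hL, List.mem_filter, List.mem_range]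
      simp [hi, valAt]
    have hmj : (j ∈ L) ↔ valAt πε j < valAt πε l := by
      rw [hL, List.mem_filter, List.mem_range]
      simp [hj, valAt]
    have hb := valAt_bounds πε h0 l hl
    rw [hlen, if_congr hmi rfl rfl, if_congr hmj rfl rfl, gg]
    split_ifs <;> omega
  simp only [blockVals]
  rw [hoff, inflVec_getD _ _ _ _ hl]
  rfl

lemma pegSegReverse_append (X Y Z : PegPerm) (hY : Y ≠ []) :
    pegSegReverse (X ++ (Y ++ Z)) X.length (X.length + Y.length - 1)
      = X ++ ((Y.map flipE).reverse ++ Z) := by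
  have hY' : Y.length ≠ 0 := fun h => hY (List.length_eq_zero_iff.mp h)
  have e1 : (X ++ (Y ++ Z)).take X.length = X := List.take_left
  have e2 : (X ++ (Y ++ Z)).drop X.length = Y ++ Z := List.drop_left
  have h1 : X.length + Y.length - 1 + 1 - X.length = Y.length := by omega
  have e3 : ((X ++ (Y ++ Z)).drop X.length).take (X.length + Y.length - 1 + 1 - X.length)
      = Y := by rw [e2, h1]; exact List.take_left
  have e4 : (X ++ (Y ++ Z)).drop (X.length + Y.length - 1 + 1) = Z := by
    rw [← List.append_assoc]
    apply List.drop_left'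
    simp
    omega
  unfold pegSegReverse
  rw [e1, e3, e4, flipE_eq]
  simp [List.append_assoc]

def blk (g : ℕ) (d : Deco) : PegPerm :=
  if d = Deco.minus then [(g + 1, d), (g, d)] else [(g, d), (g + 1, d)]
def blk0 (g : ℕ) (d : Deco) : ℕ × Deco := if d = Deco.minus then (g + 1, d) else (g, d)
def blk1 (g : ℕ) (d : Deco) : ℕ × Deco := if d = Deco.minus then (g, d) else (g + 1, d)
lemma blk_eq (g : ℕ) (d : Deco) : blk g d = [blk0 g d, blk1 g d] := by
  unfold blk blk0 blk1; split_ifs <;> rfl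
lemma blk0_snd (g : ℕ) (d : Deco) : (blk0 g d).2 = d := by unfold blk0; split_ifs <;> rfl
lemma blk1_snd (g : ℕ) (d : Deco) : (blk1 g d).2 = d := by unfold blk1; split_ifs <;> rfl

def blk3 (g : ℕ) (d : Deco) : PegPerm :=
  if d = Deco.minus then [(g + 2, d), (g + 1, d), (g, d)] else [(g, d), (g + 1, d), (g + 2, d)]
def t30 (g : ℕ) (d : Deco) : ℕ × Deco := if d = Deco.minus then (g + 2, d) else (g, d)
def t32 (g : ℕ) (d : Deco) : ℕ × Deco := if d = Deco.minus then (g, d) else (g + 2, d)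
lemma blk3_eq (g : ℕ) (d : Deco) : blk3 g d = [t30 g d, (g + 1, d), t32 g d] := by
  unfold blk3 t30 t32; split_ifs <;> rfl
lemma t30_snd (g : ℕ) (d : Deco) : (t30 g d).2 = d := by unfold t30; split_ifs <;> rfl
lemma t32_snd (g : ℕ) (d : Deco) : (t32 g d).2 = d := by unfold t32; split_ifs <;> rfl

def FF (πε : PegPerm) (i j : ℕ) (k : ℕ) : ℕ × Deco := (gg πε i j k, decoAt πε k)

lemma some_or' {α : Type} (a : α) (o : Option α) : (some a).or o = some a := rfl

lemma head?_cons_mem {α : Type} {a y : α} {l : List α} (h : y ∈ (a :: l).head?) : a = y := by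
  simp at h; exact h

lemma range'_two (s : ℕ) : List.range' s 2 = [s, s + 1] := rfl
lemma range'_three (s : ℕ) : List.range' s 3 = [s, s + 1, s + 2] := by
  show List.range' s 3 = [s, s + 1, s + 1 + 1]
  rfl

lemma range'_split (s a b c t : ℕ) (h1 : t = s + a) (h2 : c = a + b) :
    List.range' s a ++ List.range' t b = List.range' s c := by
  subst h1 h2
  have := List.range'_append (s := s) (m := a) (n := b) (step := 1)
  simpa [Nat.add_comm] using this

lemma headD_eq_getD (l : PegPerm) (d : ℕ × Deco) : l.headD d = l.getD 0 d := by
  cases l <;> rfl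

lemma getLastD_eq_getD (l : PegPerm) (d : ℕ × Deco) :
    l.getLastD d = l.getD (l.length - 1) d := by
  induction l generalizing d with
  | nil => rfl
  | cons a t ih =>
    cases t with
    | nil => rfl
    | cons b u =>
      show (b :: u).getLastD a = _
      rw [ih a]
      have h1 : (b :: u).length - 1 < (b :: u).length := by simp
      have h2 : (a :: b :: u).length - 1 < (a :: b :: u).length := by simp
      rw [List.getD_eq_getElem _ _ h1, List.getD_eq_getElem _ _ h2]
      have : (a :: b :: u).length - 1 = ((b :: u).length - 1) + 1 := by simp
      simp [this]

lemma head?_map_range' {α : Type} (f : ℕ → α) (s t : ℕ) (x : α)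
    (hx : x ∈ ((List.range' s t).map f).head?) : 0 < t ∧ x = f s := by
  cases t with
  | zero => simp at hx
  | succ u =>
    rw [List.range'_succ] at hx
    simp at hx
    exact ⟨by omega, hx.symm⟩

lemma getLast?_map_range' {α : Type} (f : ℕ → α) (s t : ℕ) (x : α)
    (hx : x ∈ ((List.range' s t).map f).getLast?) : ∃ u, t = u + 1 ∧ x = f (s + u) := by
  cases t with
  | zero => simp at hx
  | succ u =>
    rw [List.range'_concat, List.map_append] at hx
    simp only [List.map_cons, List.map_nil] at hx
    rw [List.getLast?_concat] at hx
    simp at hx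
    exact ⟨u, rfl, by simp [hx, one_mul]⟩

lemma pegI_eq_lt (πε : PegPerm) (i j : ℕ) (h0 : IsPermList (πε.map Prod.fst))
    (hij : i < j) (hj : j < πε.length) :
    pegI πε i j = ((List.range' 0 i).map (FF πε i j)) ++
      (blk (gg πε i j i) (decoAt πε i) ++
        (((List.range' (i+1) (j-i-1)).map (FF πε i j)) ++
          (blk (gg πε i j j) (decoAt πε j) ++
            ((List.range' (j+1) (πε.length-1-j)).map (FF πε i j))))) := by
  have hi : i < πε.length := by omega
  have hBsingle : ∀ x, x < πε.length → x ≠ i → x ≠ j →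
      (blockVals πε (inflVec πε.length i j) x).map (fun y => (y, (πε.getD x pegDefault).2))
        = [FF πε i j x] := by
    intro x hx hxi hxj
    rw [blockVals_eq πε i j x h0 hx hi hj]
    simp only [hxi, hxj, if_false]
    split_ifs <;> simp [FF, decoAt, List.range'_one]
  have hBi : (blockVals πε (inflVec πε.length i j) i).map (fun y => (y, (πε.getD i pegDefault).2))
      = blk (gg πε i j i) (decoAt πε i) := by
    rw [blockVals_eq πε i j i h0 hi hi hj]
    have : (1 + (if i = i then 1 else 0) + (if i = j then 1 else 0)) = 2 := by
      simp [show i ≠ j from by omega]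
    rw [this, range'_two, blk]
    split_ifs <;> simp [decoAt]
  have hBj : (blockVals πε (inflVec πε.length i j) j).map (fun y => (y, (πε.getD j pegDefault).2))
      = blk (gg πε i j j) (decoAt πε j) := by
    rw [blockVals_eq πε i j j h0 hj hi hj]
    have : (1 + (if j = i then 1 else 0) + (if j = j then 1 else 0)) = 2 := by
      simp [show j ≠ i from by omega]
    rw [this, range'_two, blk]
    split_ifs <;> simp [decoAt]
  have s1 : List.range' 0 i ++ List.range' i 1 = List.range' 0 (i+1) :=
    range'_split _ _ _ _ _ (by omega) (by omega)
  have s2 : List.range' 0 (i+1) ++ List.range' (i+1) (j-i-1) = List.range' 0 j :=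
    range'_split _ _ _ _ _ (by omega) (by omega)
  have s3 : List.range' 0 j ++ List.range' j 1 = List.range' 0 (j+1) :=
    range'_split _ _ _ _ _ (by omega) (by omega)
  have s4 : List.range' 0 (j+1) ++ List.range' (j+1) (πε.length-1-j) = List.range' 0 πε.length :=
    range'_split _ _ _ _ _ (by omega) (by omega)
  have hsplit : List.range πε.length =
      List.range' 0 i ++ (List.range' i 1 ++ (List.range' (i+1) (j-i-1) ++
        (List.range' j 1 ++ List.range' (j+1) (πε.length-1-j)))) := by
    rw [List.range_eq_range', ← s4, ← s3, ← s2, ← s1]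
    simp [List.append_assoc]
  rw [pegI, pegInflate, hsplit]
  simp only [List.map_append, List.flatten_append, List.range'_one, List.map_cons,
    List.map_nil, List.flatten_cons, List.flatten_nil, List.append_nil]
  rw [hBi, hBj]
  rw [flatten_map_eq_map _ (FF πε i j) _ (fun x hx => by
    have := List.mem_range'_1.mp hx
    exact hBsingle x (by omega) (by omega) (by omega))]
  rw [flatten_map_eq_map _ (FF πε i j) _ (fun x hx => by
    have := List.mem_range'_1.mp hx
    exact hBsingle x (by omega) (by omega) (by omega))]
  rw [flatten_map_eq_map _ (FF πε i j) _ (fun x hx => by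
    have := List.mem_range'_1.mp hx
    exact hBsingle x (by omega) (by omega) (by omega))]

lemma pegI_eq_eq (πε : PegPerm) (i : ℕ) (h0 : IsPermList (πε.map Prod.fst))
    (hi : i < πε.length) :
    pegI πε i i = ((List.range' 0 i).map (FF πε i i)) ++
      (blk3 (gg πε i i i) (decoAt πε i) ++
        ((List.range' (i+1) (πε.length-1-i)).map (FF πε i i))) := by
  have hBsingle : ∀ x, x < πε.length → x ≠ i →
      (blockVals πε (inflVec πε.length i i) x).map (fun y => (y, (πε.getD x pegDefault).2))
        = [FF πε i i x] := by
    intro x hx hxi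
    rw [blockVals_eq πε i i x h0 hx hi hi]
    simp only [hxi, if_false]
    split_ifs <;> simp [FF, decoAt, List.range'_one]
  have hBi : (blockVals πε (inflVec πε.length i i) i).map (fun y => (y, (πε.getD i pegDefault).2))
      = blk3 (gg πε i i i) (decoAt πε i) := by
    rw [blockVals_eq πε i i i h0 hi hi hi]
    have : (1 + (if i = i then 1 else 0) + (if i = i then 1 else 0)) = 3 := by simp
    rw [this, range'_three, blk3]
    split_ifs <;> simp [decoAt]
  have s1 : List.range' 0 i ++ List.range' i 1 = List.range' 0 (i+1) :=
    range'_split _ _ _ _ _ (by omega) (by omega)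
  have s2 : List.range' 0 (i+1) ++ List.range' (i+1) (πε.length-1-i) = List.range' 0 πε.length :=
    range'_split _ _ _ _ _ (by omega) (by omega)
  have hsplit : List.range πε.length =
      List.range' 0 i ++ (List.range' i 1 ++ List.range' (i+1) (πε.length-1-i)) := by
    rw [List.range_eq_range', ← s2, ← s1]
    simp [List.append_assoc]
  rw [pegI, pegInflate, hsplit]
  simp only [List.map_append, List.flatten_append, List.range'_one, List.map_cons,
    List.map_nil, List.flatten_cons, List.flatten_nil, List.append_nil]
  rw [hBi]
  rw [flatten_map_eq_map _ (FF πε i i) _ (fun x hx => by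
    have := List.mem_range'_1.mp hx
    exact hBsingle x (by omega) (by omega))]
  rw [flatten_map_eq_map _ (FF πε i i) _ (fun x hx => by
    have := List.mem_range'_1.mp hx
    exact hBsingle x (by omega) (by omega))]

lemma pegITilde_eq_lt (πε : PegPerm) (i j : ℕ) (h0 : IsPermList (πε.map Prod.fst))
    (hij : i < j) (hj : j < πε.length) :
    pegITilde πε i j =
      ((List.range' 0 i).map (FF πε i j)) ++
        blk0 (gg πε i j i) (decoAt πε i) ::
        flipE (blk0 (gg πε i j j) (decoAt πε j)) ::
        ((((List.range' (i+1) (j-i-1)).map (FF πε i j)).map flipE).reverse ++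
          flipE (blk1 (gg πε i j i) (decoAt πε i)) ::
          blk1 (gg πε i j j) (decoAt πε j) ::
          ((List.range' (j+1) (πε.length-1-j)).map (FF πε i j))) := by
  set A := (List.range' 0 i).map (FF πε i j) with hA
  set M := (List.range' (i+1) (j-i-1)).map (FF πε i j) with hM
  set C := (List.range' (j+1) (πε.length-1-j)).map (FF πε i j) with hC
  set b0 := blk0 (gg πε i j i) (decoAt πε i)
  set b1 := blk1 (gg πε i j i) (decoAt πε i)
  set c0 := blk0 (gg πε i j j) (decoAt πε j)
  set c1 := blk1 (gg πε i j j) (decoAt πε j)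
  rw [pegITilde, pegI_eq_lt πε i j h0 hij hj, blk_eq, blk_eq]
  have hshape : A ++ ([b0, b1] ++ (M ++ ([c0, c1] ++ C)))
      = (A ++ [b0]) ++ ((b1 :: (M ++ [c0])) ++ (c1 :: C)) := by
    simp [List.append_assoc]
  rw [hshape]
  have hx : (A ++ [b0]).length = i + 1 := by simp [hA]
  have hxy : (A ++ [b0]).length + (b1 :: (M ++ [c0])).length - 1 = j + 1 := by
    simp [hA, hM]; omega
  rw [← hx, ← hxy, pegSegReverse_append _ _ _ (by simp)]
  simp [List.reverse_append, List.append_assoc]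

lemma pegITilde_eq_eq (πε : PegPerm) (i : ℕ) (h0 : IsPermList (πε.map Prod.fst))
    (hi : i < πε.length) :
    pegITilde πε i i =
      ((List.range' 0 i).map (FF πε i i)) ++
        t30 (gg πε i i i) (decoAt πε i) ::
        flipE (gg πε i i i + 1, decoAt πε i) ::
        t32 (gg πε i i i) (decoAt πε i) ::
        ((List.range' (i+1) (πε.length-1-i)).map (FF πε i i)) := by
  set A := (List.range' 0 i).map (FF πε i i) with hA
  set C := (List.range' (i+1) (πε.length-1-i)).map (FF πε i i) with hC
  set t0 := t30 (gg πε i i i) (decoAt πε i)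
  set t1 := (gg πε i i i + 1, decoAt πε i)
  set t2 := t32 (gg πε i i i) (decoAt πε i)
  rw [pegITilde, pegI_eq_eq πε i h0 hi, blk3_eq]
  have hshape : A ++ ([t0, t1, t2] ++ C) = (A ++ [t0]) ++ ([t1] ++ (t2 :: C)) := by
    simp [List.append_assoc]
  rw [hshape]
  have hx : (A ++ [t0]).length = i + 1 := by simp [hA]
  have h5 := pegSegReverse_append (A ++ [t0]) [t1] (t2 :: C) (by simp)
  rw [hx] at h5
  simp only [List.length_singleton] at h5
  rw [show i + 1 + 1 - 1 = i + 1 from rfl] at h5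
  rw [h5]
  simp [List.append_assoc]

/-- properties of `π̃^ε_I` (indices `i ≤ j` are 0-indexed here, so the
multiset `I` of the paper is `{i+1, j+1}`). -/
theorem pegITilde_properties (πε : PegPerm) (n : ℕ) (hn : πε.length = n)
    (h0 : IsPegPermList πε) (h1 : CleanCompact πε)
    (h2 : ∀ p ∈ πε, p.2 ≠ Deco.dot)
    (i j : ℕ) (hij : i ≤ j) (hj : j < n) :
    (CleanCompact (pegITilde πε i j) ∧ (pegITilde πε i j).length = n + 2 ∧
      ∀ p ∈ pegITilde πε i j, p.2 ≠ Deco.dot) ∧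
    (πε.headD pegDefault = (1, Deco.plus) → πε.getLastD pegDefault = (n, Deco.plus) →
      (pegITilde πε i j).headD pegDefault = (1, Deco.plus) ∧
      (pegITilde πε i j).getLastD pegDefault = (n + 2, Deco.plus)) := by
  subst hn
  have h0' : IsPermList (πε.map Prod.fst) := h0
  have h2' : ∀ k, k < πε.length → decoAt πε k ≠ Deco.dot := by
    intro k hk
    have hmem : πε.getD k pegDefault ∈ πε := by
      rw [List.getD_eq_getElem _ _ hk]; exact List.getElem_mem _
    exact h2 _ hmem
  have hP : ∀ k, k + 1 < πε.length →
      ¬ ((valAt πε (k+1) = valAt πε k + 1 ∧ dn (decoAt πε k) ≠ 1 ∧ dn (decoAt πε (k+1)) ≠ 1) ∨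
         (valAt πε k = valAt πε (k+1) + 1 ∧ dn (decoAt πε k) ≠ 0 ∧ dn (decoAt πε (k+1)) ≠ 0)) := by
    intro k hk h
    exact h1 k hk ((stripPair_iff _ _).mpr h)
  have hB : ∀ k, k < πε.length → 1 ≤ valAt πε k ∧ valAt πε k ≤ πε.length :=
    fun k hk => valAt_bounds πε h0' k hk
  have hI : ∀ k m, k < πε.length → m < πε.length → k ≠ m → valAt πε k ≠ valAt πε m := by
    intro k m hk hm hne h
    exact hne (valAt_inj πε h0' hk hm h)
  rcases lt_or_eq_of_le hij with hlt | rfl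
  · -- case i < j
    have hiL : i < πε.length := by omega
    have hvij : valAt πε i ≠ valAt πε j := hI _ _ (by omega) (by omega) (by omega)
    have hres := pegITilde_eq_lt πε i j h0' hlt hj
    have hres2 : pegITilde πε i j =
        ((List.range' 0 i).map (FF πε i j)) ++
          blk0 (gg πε i j i) (decoAt πε i) ::
          flipE (blk0 (gg πε i j j) (decoAt πε j)) ::
          ((((List.range' (i+1) (j-i-1)).map (fun k => flipE (FF πε i j k))).reverse) ++
            flipE (blk1 (gg πε i j i) (decoAt πε i)) ::
            blk1 (gg πε i j j) (decoAt πε j) ::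
            ((List.range' (j+1) (πε.length-1-j)).map (FF πε i j))) := by
      rw [hres, List.map_map]
      rfl
    have hFF : ∀ k, k + 1 < πε.length → k ≠ i → k + 1 ≠ i → k ≠ j → k + 1 ≠ j →
        ¬ StripPair (FF πε i j k) (FF πε i j (k+1)) := by
      intro k hk hk1 hk2 hk3 hk4 hs
      rw [stripPair_iff] at hs
      have hp := hP k hk
      have d1 : valAt πε k ≠ valAt πε i := hI _ _ (by omega) (by omega) hk1
      have d2 : valAt πε (k+1) ≠ valAt πε i := hI _ _ (by omega) (by omega) hk2
      have d3 : valAt πε k ≠ valAt πε j := hI _ _ (by omega) (by omega) hk3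
      have d4 : valAt πε (k+1) ≠ valAt πε j := hI _ _ (by omega) (by omega) hk4
      simp only [FF, gg] at hs
      split_ifs at hs <;> omega
    have hJ1 : ∀ u, i = u + 1 →
        ¬ StripPair (FF πε i j u) (blk0 (gg πε i j i) (decoAt πε i)) := by
      intro u hu
      have hp := hP u (by omega)
      rw [show u + 1 = i from hu.symm] at hp
      have d1 : valAt πε u ≠ valAt πε i := hI _ _ (by omega) (by omega) (by omega)
      have d3 : valAt πε u ≠ valAt πε j := hI _ _ (by omega) (by omega) (by omega)
      cases hdi : decoAt πε i with
      | dot => exact absurd hdi (h2' i (by omega))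
      | plus =>
        intro hs
        rw [stripPair_iff] at hs
        rw [hdi] at hp
        try simp [blk0, FF, gg, flipE, flipDeco_plus, flipDeco_minus, dn_plus, dn_minus] at hs
        try simp [dn_plus, dn_minus] at hp
        try split_ifs at hs
        all_goals omega
      | minus =>
        intro hs
        rw [stripPair_iff] at hs
        rw [hdi] at hp
        try simp [blk0, FF, gg, flipE, flipDeco_plus, flipDeco_minus, dn_plus, dn_minus] at hs
        try simp [dn_plus, dn_minus] at hp
        try split_ifs at hs
        all_goals omega
    have hJ2 : ¬ StripPair (blk0 (gg πε i j i) (decoAt πε i))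
        (flipE (blk0 (gg πε i j j) (decoAt πε j))) := by
      cases hdi : decoAt πε i with
      | dot => exact absurd hdi (h2' i (by omega))
      | plus =>
        cases hdj : decoAt πε j with
        | dot => exact absurd hdj (h2' j (by omega))
        | plus =>
          intro hs
          rw [stripPair_iff] at hs
          try simp [blk0, flipE, flipDeco, gg, flipE, flipDeco_plus, flipDeco_minus, dn_plus, dn_minus] at hs
          try split_ifs at hs
          all_goals omega
        | minus =>
          intro hs
          rw [stripPair_iff] at hs
          try simp [blk0, flipE, flipDeco, gg, flipE, flipDeco_plus, flipDeco_minus, dn_plus, dn_minus] at hs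
          try split_ifs at hs
          all_goals omega
      | minus =>
        cases hdj : decoAt πε j with
        | dot => exact absurd hdj (h2' j (by omega))
        | plus =>
          intro hs
          rw [stripPair_iff] at hs
          try simp [blk0, flipE, flipDeco, gg, flipE, flipDeco_plus, flipDeco_minus, dn_plus, dn_minus] at hs
          try split_ifs at hs
          all_goals omega
        | minus =>
          intro hs
          rw [stripPair_iff] at hs
          try simp [blk0, flipE, flipDeco, gg, flipE, flipDeco_plus, flipDeco_minus, dn_plus, dn_minus] at hs
          try split_ifs at hs
          all_goals omega
    have hJ3 : ∀ u, j - i - 1 = u + 1 →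
        ¬ StripPair (flipE (blk0 (gg πε i j j) (decoAt πε j)))
          (flipE (FF πε i j (i + 1 + u))) := by
      intro u hu
      have hk1 : i + 1 + u + 1 = j := by omega
      have hp := hP (i + 1 + u) (by omega)
      rw [hk1] at hp
      have d1 : valAt πε (i+1+u) ≠ valAt πε i := hI _ _ (by omega) (by omega) (by omega)
      have d3 : valAt πε (i+1+u) ≠ valAt πε j := hI _ _ (by omega) (by omega) (by omega)
      have hfd := dn_flip_add (decoAt πε (i+1+u)) (h2' (i+1+u) (by omega))
      cases hdj : decoAt πε j with
      | dot => exact absurd hdj (h2' j (by omega))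
      | plus =>
        intro hs
        rw [stripPair_iff] at hs
        rw [hdj] at hp
        try simp [blk0, flipE, flipDeco, FF, gg, dn] at hs hfd
        try simp [dn, flipDeco] at hp
        try split_ifs at hs
        all_goals omega
      | minus =>
        intro hs
        rw [stripPair_iff] at hs
        rw [hdj] at hp
        try simp [blk0, flipE, flipDeco, FF, gg, dn] at hs hfd
        try simp [dn, flipDeco] at hp
        try split_ifs at hs
        all_goals omega
    have hJ3' : j = i + 1 →
        ¬ StripPair (flipE (blk0 (gg πε i j j) (decoAt πε j)))
          (flipE (blk1 (gg πε i j i) (decoAt πε i))) := by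
      intro hji
      have hp := hP i (by omega)
      rw [show i + 1 = j from hji.symm] at hp
      cases hdi : decoAt πε i with
      | dot => exact absurd hdi (h2' i (by omega))
      | plus =>
        cases hdj : decoAt πε j with
        | dot => exact absurd hdj (h2' j (by omega))
        | plus =>
          intro hs
          rw [stripPair_iff] at hs
          rw [hdi, hdj] at hp
          try simp [blk0, blk1, flipE, flipDeco, gg, flipE, flipDeco_plus, flipDeco_minus, dn_plus, dn_minus] at hs
          try simp [dn_plus, dn_minus] at hp
          try split_ifs at hs
          all_goals omega
        | minus =>
          intro hs
          rw [stripPair_iff] at hs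
          rw [hdi, hdj] at hp
          try simp [blk0, blk1, flipE, flipDeco, gg, flipE, flipDeco_plus, flipDeco_minus, dn_plus, dn_minus] at hs
          try simp [dn_plus, dn_minus] at hp
          try split_ifs at hs
          all_goals omega
      | minus =>
        cases hdj : decoAt πε j with
        | dot => exact absurd hdj (h2' j (by omega))
        | plus =>
          intro hs
          rw [stripPair_iff] at hs
          rw [hdi, hdj] at hp
          try simp [blk0, blk1, flipE, flipDeco, gg, flipE, flipDeco_plus, flipDeco_minus, dn_plus, dn_minus] at hs
          try simp [dn_plus, dn_minus] at hp
          try split_ifs at hs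
          all_goals omega
        | minus =>
          intro hs
          rw [stripPair_iff] at hs
          rw [hdi, hdj] at hp
          try simp [blk0, blk1, flipE, flipDeco, gg, flipE, flipDeco_plus, flipDeco_minus, dn_plus, dn_minus] at hs
          try simp [dn_plus, dn_minus] at hp
          try split_ifs at hs
          all_goals omega
    have hJ4 : 0 < j - i - 1 →
        ¬ StripPair (flipE (FF πε i j (i + 1)))
          (flipE (blk1 (gg πε i j i) (decoAt πε i))) := by
      intro hpos
      have hp := hP i (by omega)
      have d1 : valAt πε (i+1) ≠ valAt πε i := hI _ _ (by omega) (by omega) (by omega)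
      have d3 : valAt πε (i+1) ≠ valAt πε j := hI _ _ (by omega) (by omega) (by omega)
      have hfd := dn_flip_add (decoAt πε (i+1)) (h2' (i+1) (by omega))
      cases hdi : decoAt πε i with
      | dot => exact absurd hdi (h2' i (by omega))
      | plus =>
        intro hs
        rw [stripPair_iff] at hs
        rw [hdi] at hp
        try simp [blk1, flipE, flipDeco, FF, gg, dn] at hs hfd
        try simp [dn, flipDeco] at hp
        try split_ifs at hs
        all_goals omega
      | minus =>
        intro hs
        rw [stripPair_iff] at hs
        rw [hdi] at hp
        try simp [blk1, flipE, flipDeco, FF, gg, dn] at hs hfd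
        try simp [dn, flipDeco] at hp
        try split_ifs at hs
        all_goals omega
    have hJ5 : ¬ StripPair (flipE (blk1 (gg πε i j i) (decoAt πε i)))
        (blk1 (gg πε i j j) (decoAt πε j)) := by
      cases hdi : decoAt πε i with
      | dot => exact absurd hdi (h2' i (by omega))
      | plus =>
        cases hdj : decoAt πε j with
        | dot => exact absurd hdj (h2' j (by omega))
        | plus =>
          intro hs
          rw [stripPair_iff] at hs
          try simp [blk1, flipE, flipDeco, gg, flipE, flipDeco_plus, flipDeco_minus, dn_plus, dn_minus] at hs
          try split_ifs at hs
          all_goals omega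
        | minus =>
          intro hs
          rw [stripPair_iff] at hs
          try simp [blk1, flipE, flipDeco, gg, flipE, flipDeco_plus, flipDeco_minus, dn_plus, dn_minus] at hs
          try split_ifs at hs
          all_goals omega
      | minus =>
        cases hdj : decoAt πε j with
        | dot => exact absurd hdj (h2' j (by omega))
        | plus =>
          intro hs
          rw [stripPair_iff] at hs
          try simp [blk1, flipE, flipDeco, gg, flipE, flipDeco_plus, flipDeco_minus, dn_plus, dn_minus] at hs
          try split_ifs at hs
          all_goals omega
        | minus =>
          intro hs
          rw [stripPair_iff] at hs
          try simp [blk1, flipE, flipDeco, gg, flipE, flipDeco_plus, flipDeco_minus, dn_plus, dn_minus] at hs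
          try split_ifs at hs
          all_goals omega
    have hJ6 : 0 < πε.length - 1 - j →
        ¬ StripPair (blk1 (gg πε i j j) (decoAt πε j)) (FF πε i j (j + 1)) := by
      intro hpos
      have hp := hP j (by omega)
      have d1 : valAt πε (j+1) ≠ valAt πε i := hI _ _ (by omega) (by omega) (by omega)
      have d3 : valAt πε (j+1) ≠ valAt πε j := hI _ _ (by omega) (by omega) (by omega)
      cases hdj : decoAt πε j with
      | dot => exact absurd hdj (h2' j (by omega))
      | plus =>
        intro hs
        rw [stripPair_iff] at hs
        rw [hdj] at hp
        try simp [blk1, FF, gg, flipE, flipDeco_plus, flipDeco_minus, dn_plus, dn_minus] at hs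
        try simp [dn_plus, dn_minus] at hp
        try split_ifs at hs
        all_goals omega
      | minus =>
        intro hs
        rw [stripPair_iff] at hs
        rw [hdj] at hp
        try simp [blk1, FF, gg, flipE, flipDeco_plus, flipDeco_minus, dn_plus, dn_minus] at hs
        try simp [dn_plus, dn_minus] at hp
        try split_ifs at hs
        all_goals omega
    refine ⟨⟨?_, ?_, ?_⟩, ?_⟩
    · -- CleanCompact
      simp only [cleanCompact_iff_chain', List.Chain']
      rw [hres2, List.isChain_append]
      refine ⟨?_, ?_, ?_⟩
      · apply chain'_map_range'
        intro k hk0 hk1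
        exact hFF k (by omega) (by omega) (by omega) (by omega) (by omega)
      · rw [List.isChain_cons, List.isChain_cons]
        refine ⟨?_, ?_, ?_⟩
        · intro y hy
          obtain rfl := head?_cons_mem hy
          exact hJ2
        · -- fc0 vs head of (RM ++ fb1 :: c1 :: C)
          intro y hy
          rw [List.head?_append, List.head?_reverse] at hy
          cases hg : ((List.range' (i+1) (j-i-1)).map (fun k => flipE (FF πε i j k))).getLast? with
          | none =>
            rw [hg] at hy
            simp only [Option.none_or, List.head?_cons, Option.mem_some_iff] at hy
            subst hy
            have hji : j = i + 1 := by
              have := List.getLast?_eq_none_iff.mp hg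
              have := List.map_eq_nil_iff.mp this
              have := List.range'_eq_nil_iff.mp this
              omega
            exact hJ3' hji
          | some a =>
            rw [hg] at hy
            simp only [some_or', Option.mem_some_iff] at hy
            subst hy
            obtain ⟨u, hu, rfl⟩ := getLast?_map_range' _ _ _ _ (by rw [hg]; exact rfl)
            exact hJ3 u hu
        · rw [List.isChain_append, List.isChain_cons, List.isChain_cons]
          refine ⟨?_, ⟨?_, ?_, ?_⟩, ?_⟩
          · -- Chain' RM
            rw [List.isChain_reverse]
            rw [List.isChain_map]
            rw [List.isChain_iff_getElem]
            intro k hk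
            simp only [List.length_range'] at hk
            simp only [List.get_eq_getElem, List.getElem_range']
            show ¬ StripPair (flipE (FF πε i j (i + 1 + 1 * (k + 1)))) (flipE (FF πε i j (i + 1 + 1 * k)))
            rw [show i + 1 + 1 * (k + 1) = (i + 1 + 1 * k) + 1 by omega, stripPair_flip]
            exact hFF (i + 1 + 1 * k) (by omega) (by omega) (by omega) (by omega) (by omega)
          · -- fb1 vs c1
            intro y hy
            obtain rfl := head?_cons_mem hy
            exact hJ5
          · -- c1 vs head of C
            intro y hy
            obtain ⟨hpos, rfl⟩ := head?_map_range' _ _ _ _ hy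
            exact hJ6 hpos
          · apply chain'_map_range'
            intro k hk0 hk1
            exact hFF k (by omega) (by omega) (by omega) (by omega) (by omega)
          · -- last of RM vs fb1
            intro x hx y hy
            obtain rfl := head?_cons_mem hy
            rw [List.getLast?_reverse] at hx
            obtain ⟨hpos, rfl⟩ := head?_map_range' _ _ _ _ hx
            exact hJ4 hpos
      · -- last of A vs b0
        intro x hx y hy
        obtain rfl := head?_cons_mem hy
        obtain ⟨u, hu, rfl⟩ := getLast?_map_range' _ _ _ _ hx
        rw [Nat.zero_add]
        exact hJ1 u hu
    · -- length
      rw [hres2]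
      simp [List.length_append, List.length_map, List.length_range']
      omega
    · -- no dots
      rw [hres2]
      intro p hp
      simp only [List.mem_append, List.mem_cons, List.mem_reverse, List.mem_map] at hp
      rcases hp with ⟨a, ha, rfl⟩ | rfl | rfl | ⟨a, ha, rfl⟩ | rfl | rfl | ⟨a, ha, rfl⟩
      · have := List.mem_range'_1.mp ha
        exact h2' a (by omega)
      · simpa [blk0_snd] using h2' i (by omega)
      · simp only [flipE, blk0_snd]
        intro h
        exact h2' j (by omega) ((flipDeco_eq_dot _).mp h)
      · have := List.mem_range'_1.mp ha
        simp only [flipE, FF]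
        intro h
        exact h2' a (by omega) ((flipDeco_eq_dot _).mp h)
      · simp only [flipE, blk1_snd]
        intro h
        exact h2' i (by omega) ((flipDeco_eq_dot _).mp h)
      · simpa [blk1_snd] using h2' j (by omega)
      · have := List.mem_range'_1.mp ha
        exact h2' a (by omega)
    · -- head and last
      intro hh hl
      rw [headD_eq_getD] at hh
      rw [getLastD_eq_getD] at hl
      have hv0 : valAt πε 0 = 1 := by rw [valAt, hh]
      have hd0 : decoAt πε 0 = Deco.plus := by rw [decoAt, hh]
      have hvl : valAt πε (πε.length - 1) = πε.length := by rw [valAt, hl]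
      have hdl : decoAt πε (πε.length - 1) = Deco.plus := by rw [decoAt, hl]
      constructor
      · rw [hres2, headD_eq_getD]
        rcases Nat.eq_zero_or_pos i with rfl | hip
        · simp only [List.range'_zero, List.map_nil, List.nil_append, List.getD_cons_zero]
          rw [show decoAt πε 0 = Deco.plus from hd0]
          have hg0 : gg πε 0 j 0 = 1 := by
            rw [gg, hv0]
            have hbj := hB j (by omega)
            have hbi := hB 0 (by omega)
            split_ifs <;> omega
          simp [blk0, hg0]
        · obtain ⟨u, rfl⟩ : ∃ u, i = u + 1 := ⟨i - 1, by omega⟩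
          rw [List.range'_succ, List.map_cons, List.cons_append, List.getD_cons_zero]
          have hbi := hB (u+1) (by omega)
          have hbj := hB j (by omega)
          have hg0 : gg πε (u+1) j 0 = 1 := by
            rw [gg, hv0]; split_ifs <;> omega
          simp [FF, hg0, hd0]
      · rw [hres2]
        rcases Nat.lt_or_ge (j+1) πε.length with hjlt | hjge
        · obtain ⟨m, hm⟩ : ∃ m, πε.length - 1 - j = m + 1 := ⟨πε.length - 2 - j, by omega⟩
          rw [hm, List.range'_concat, List.map_append]
          simp only [List.map_cons, List.map_nil]
          rw [show ((List.range' 0 i).map (FF πε i j)) ++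
                blk0 (gg πε i j i) (decoAt πε i) ::
                flipE (blk0 (gg πε i j j) (decoAt πε j)) ::
                ((((List.range' (i+1) (j-i-1)).map (fun k => flipE (FF πε i j k))).reverse) ++
                  flipE (blk1 (gg πε i j i) (decoAt πε i)) ::
                  blk1 (gg πε i j j) (decoAt πε j) ::
                  (((List.range' (j+1) m).map (FF πε i j)) ++ [FF πε i j (j + 1 + 1 * m)]))
              = (((List.range' 0 i).map (FF πε i j)) ++
                blk0 (gg πε i j i) (decoAt πε i) ::
                flipE (blk0 (gg πε i j j) (decoAt πε j)) ::
                ((((List.range' (i+1) (j-i-1)).map (fun k => flipE (FF πε i j k))).reverse) ++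
                  flipE (blk1 (gg πε i j i) (decoAt πε i)) ::
                  blk1 (gg πε i j j) (decoAt πε j) ::
                  ((List.range' (j+1) m).map (FF πε i j)))) ++ [FF πε i j (j + 1 + 1 * m)]
            from by simp]
          rw [List.getLastD_concat]
          have hidx : j + 1 + 1 * m = πε.length - 1 := by omega
          rw [hidx]
          have hbi := hB i (by omega)
          have hbj := hB j (by omega)
          have hnei : valAt πε i ≠ valAt πε (πε.length - 1) := hI _ _ (by omega) (by omega) (by omega)
          have hnej : valAt πε j ≠ valAt πε (πε.length - 1) := hI _ _ (by omega) (by omega) (by omega)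
          have hgl : gg πε i j (πε.length - 1) = πε.length + 2 := by
            rw [gg, hvl]; split_ifs <;> omega
          simp [FF, hgl, hdl]
        · have hC0 : πε.length - 1 - j = 0 := by omega
          rw [hC0]
          simp only [List.range'_zero, List.map_nil, List.append_nil]
          rw [show ((List.range' 0 i).map (FF πε i j)) ++
                blk0 (gg πε i j i) (decoAt πε i) ::
                flipE (blk0 (gg πε i j j) (decoAt πε j)) ::
                ((((List.range' (i+1) (j-i-1)).map (fun k => flipE (FF πε i j k))).reverse) ++
                  flipE (blk1 (gg πε i j i) (decoAt πε i)) ::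
                  blk1 (gg πε i j j) (decoAt πε j) :: ([] : PegPerm))
              = (((List.range' 0 i).map (FF πε i j)) ++
                blk0 (gg πε i j i) (decoAt πε i) ::
                flipE (blk0 (gg πε i j j) (decoAt πε j)) ::
                ((((List.range' (i+1) (j-i-1)).map (fun k => flipE (FF πε i j k))).reverse) ++
                  [flipE (blk1 (gg πε i j i) (decoAt πε i))])) ++
                [blk1 (gg πε i j j) (decoAt πε j)]
            from by simp]
          rw [List.getLastD_concat]
          have hjj : j = πε.length - 1 := by omega
          have hbi := hB i (by omega)
          have hnei : valAt πε i ≠ valAt πε j := hvij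
          have hvj : valAt πε j = πε.length := by rw [hjj]; exact hvl
          have hdj : decoAt πε j = Deco.plus := by rw [hjj]; exact hdl
          have hgj : gg πε i j j = πε.length + 1 := by
            rw [gg, hvj]
            split_ifs <;> omega
          rw [hdj]
          simp [blk1, hgj]

  · -- case i = j
    have hin : i < πε.length := hj
    have hres := pegITilde_eq_eq πε i h0' hin
    have hFF : ∀ k, k + 1 < πε.length → k ≠ i → k + 1 ≠ i →
        ¬ StripPair (FF πε i i k) (FF πε i i (k+1)) := by
      intro k hk hk1 hk2 hs
      rw [stripPair_iff] at hs
      have hp := hP k hk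
      have d1 : valAt πε k ≠ valAt πε i := hI _ _ (by omega) (by omega) hk1
      have d2 : valAt πε (k+1) ≠ valAt πε i := hI _ _ (by omega) (by omega) hk2
      simp only [FF, gg] at hs
      split_ifs at hs <;> omega
    refine ⟨⟨?_, ?_, ?_⟩, ?_⟩
    · -- CleanCompact
      simp only [cleanCompact_iff_chain', List.Chain']
      rw [hres, List.isChain_append]
      refine ⟨?_, ?_, ?_⟩
      · apply chain'_map_range'
        intro k hk0 hk1
        exact hFF k (by omega) (by omega) (by omega)
      · rw [List.isChain_cons, List.isChain_cons, List.isChain_cons]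
        refine ⟨?_, ?_, ?_, ?_⟩
        · -- t0 vs flipped middle
          intro y hy
          obtain rfl := head?_cons_mem hy
          cases hd : decoAt πε i with
          | dot => exact absurd hd (h2' i (by omega))
          | plus =>
            intro hs
            rw [stripPair_iff] at hs
            try simp [t30, flipE, flipDeco, dn] at hs
            try split_ifs at hs
            all_goals omega
          | minus =>
            intro hs
            rw [stripPair_iff] at hs
            try simp [t30, flipE, flipDeco, dn] at hs
            try split_ifs at hs
            all_goals omega
        · -- flipped middle vs t2
          intro y hy
          obtain rfl := head?_cons_mem hy
          cases hd : decoAt πε i with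
          | dot => exact absurd hd (h2' i (by omega))
          | plus =>
            intro hs
            rw [stripPair_iff] at hs
            try simp [t32, flipE, flipDeco, dn] at hs
            try split_ifs at hs
            all_goals omega
          | minus =>
            intro hs
            rw [stripPair_iff] at hs
            try simp [t32, flipE, flipDeco, dn] at hs
            try split_ifs at hs
            all_goals omega
        · -- t2 vs head of C
          intro y hy
          obtain ⟨htpos, rfl⟩ := head?_map_range' _ _ _ _ hy
          have hi1 : i + 1 < πε.length := by omega
          have hp := hP i (by omega)
          have d2 : valAt πε (i+1) ≠ valAt πε i := hI _ _ (by omega) (by omega) (by omega)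
          cases hd : decoAt πε i with
          | dot => exact absurd hd (h2' i (by omega))
          | plus =>
            intro hs
            rw [stripPair_iff] at hs
            rw [hd] at hp
            try simp [t32, FF, gg, dn] at hs
            try simp [dn] at hp
            try split_ifs at hs
            all_goals omega
          | minus =>
            intro hs
            rw [stripPair_iff] at hs
            rw [hd] at hp
            try simp [t32, FF, gg, dn] at hs
            try simp [dn] at hp
            try split_ifs at hs
            all_goals omega
        · apply chain'_map_range'
          intro k hk0 hk1
          exact hFF k (by omega) (by omega) (by omega)
      · -- junction last of A vs t0
        intro x hx y hy
        obtain rfl := head?_cons_mem hy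
        obtain ⟨u, hu, rfl⟩ := getLast?_map_range' _ _ _ _ hx
        rw [Nat.zero_add]
        have hp := hP u (by omega)
        rw [show u + 1 = i from hu.symm] at hp
        have d1 : valAt πε u ≠ valAt πε i := hI _ _ (by omega) (by omega) (by omega)
        cases hd : decoAt πε i with
        | dot => exact absurd hd (h2' i (by omega))
        | plus =>
          intro hs
          rw [stripPair_iff] at hs
          rw [hd] at hp
          try simp [t30, FF, gg, dn] at hs
          try simp [dn] at hp
          try split_ifs at hs
          all_goals omega
        | minus =>
          intro hs
          rw [stripPair_iff] at hs
          rw [hd] at hp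
          try simp [t30, FF, gg, dn] at hs
          try simp [dn] at hp
          try split_ifs at hs
          all_goals omega
    · -- length
      rw [hres]
      simp [List.length_append, List.length_map, List.length_range']
      omega
    · -- no dot decorations
      rw [hres]
      intro p hp
      simp only [List.mem_append, List.mem_cons, List.mem_map] at hp
      rcases hp with ⟨a, ha, rfl⟩ | rfl | rfl | rfl | ⟨a, ha, rfl⟩
      · have := List.mem_range'_1.mp ha
        exact h2' a (by omega)
      · simpa [t30_snd] using h2' i (by omega)
      · simp only [flipE]
        intro h
        exact h2' i (by omega) ((flipDeco_eq_dot _).mp h)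
      · simpa [t32_snd] using h2' i (by omega)
      · have := List.mem_range'_1.mp ha
        exact h2' a (by omega)
    · -- head and last
      intro hh hl
      rw [headD_eq_getD] at hh
      rw [getLastD_eq_getD] at hl
      have hv0 : valAt πε 0 = 1 := by rw [valAt, hh]
      have hd0 : decoAt πε 0 = Deco.plus := by rw [decoAt, hh]
      have hvl : valAt πε (πε.length - 1) = πε.length := by rw [valAt, hl]
      have hdl : decoAt πε (πε.length - 1) = Deco.plus := by rw [decoAt, hl]
      constructor
      · rw [hres, headD_eq_getD]
        rcases Nat.eq_zero_or_pos i with rfl | hip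
        · simp only [List.range'_zero, List.map_nil, List.nil_append, List.getD_cons_zero]
          rw [show decoAt πε 0 = Deco.plus from hd0]
          simp [t30, gg, hv0, hd0]
        · obtain ⟨u, rfl⟩ : ∃ u, i = u + 1 := ⟨i - 1, by omega⟩
          rw [List.range'_succ, List.map_cons, List.cons_append, List.getD_cons_zero]
          have hbi := hB (u+1) (by omega)
          have hg0 : gg πε (u+1) (u+1) 0 = 1 := by
            rw [gg, hv0]; split_ifs <;> omega
          simp [FF, hg0, hd0]
      · rw [hres]
        rcases Nat.lt_or_ge (i+1) πε.length with hilt | hige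
        · obtain ⟨m, hm⟩ : ∃ m, πε.length - 1 - i = m + 1 := ⟨πε.length - 2 - i, by omega⟩
          rw [hm, List.range'_concat, List.map_append]
          simp only [List.map_cons, List.map_nil]
          rw [show ((List.range' 0 i).map (FF πε i i)) ++
                t30 (gg πε i i i) (decoAt πε i) ::
                flipE (gg πε i i i + 1, decoAt πε i) ::
                t32 (gg πε i i i) (decoAt πε i) ::
                (((List.range' (i+1) m).map (FF πε i i)) ++ [FF πε i i (i + 1 + 1 * m)])
              = (((List.range' 0 i).map (FF πε i i)) ++
                t30 (gg πε i i i) (decoAt πε i) ::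
                flipE (gg πε i i i + 1, decoAt πε i) ::
                t32 (gg πε i i i) (decoAt πε i) ::
                ((List.range' (i+1) m).map (FF πε i i))) ++ [FF πε i i (i + 1 + 1 * m)]
            from by simp]
          rw [List.getLastD_concat]
          have hidx : i + 1 + 1 * m = πε.length - 1 := by omega
          rw [hidx]
          have hbi := hB i (by omega)
          have hne : valAt πε i ≠ valAt πε (πε.length - 1) := hI _ _ (by omega) (by omega) (by omega)
          have hgl : gg πε i i (πε.length - 1) = πε.length + 2 := by
            rw [gg, hvl]; split_ifs <;> omega
          simp [FF, hgl, hdl]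
        · have hC0 : πε.length - 1 - i = 0 := by omega
          rw [hC0]
          simp only [List.range'_zero, List.map_nil]
          rw [show ((List.range' 0 i).map (FF πε i i)) ++
                t30 (gg πε i i i) (decoAt πε i) ::
                flipE (gg πε i i i + 1, decoAt πε i) ::
                t32 (gg πε i i i) (decoAt πε i) :: ([] : PegPerm)
              = (((List.range' 0 i).map (FF πε i i)) ++
                [t30 (gg πε i i i) (decoAt πε i),
                 flipE (gg πε i i i + 1, decoAt πε i)]) ++ [t32 (gg πε i i i) (decoAt πε i)]
            from by simp]
          rw [List.getLastD_concat]
          have hii : i = πε.length - 1 := by omega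
          rw [hii, show decoAt πε (πε.length - 1) = Deco.plus from hdl]
          simp [t32, gg, hvl, hdl]
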